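/- Let G be a connected multigraph with a chosen root q, and let (<, A) be a q-connected pair: a spanning tree T oriented away from q whose edges are labeled 1,…,n−1 so that each tree edge is smaller than its descendants, extended arbitrarily to a total order and full orientation of all edges. Then a full orientation of G is cut minimal with respect to (<, A) if and only if it is q-connected, i.e., every directed cut is oriented away from q (equivalently, every vertex is reachable from q by a directed path). -/

import Mathlib

open Classical

noncomputable section

/-- A finite multigraph, given by a finite vertex type, a finite edge type, and
two endpoint maps (which also provide a built-in reference direction for each edge). -/
structure Multigraph where
  V : Type
  E : Type
  [fintypeV : Fintype V]
  [fintypeE : Fintype E]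
  fst : E → V
  snd : E → V

attribute [instance] Multigraph.fintypeV Multigraph.fintypeE

namespace Multigraph

variable (G : Multigraph)

/-- Adjacency between vertices using only edges in `S`. -/
def adjOn (S : Set G.E) (u v : G.V) : Prop :=
  ∃ e ∈ S, (G.fst e = u ∧ G.snd e = v) ∨ (G.fst e = v ∧ G.snd e = u)

/-- Reachability (in the undirected sense) using only edges in `S`. -/
def reachOn (S : Set G.E) : G.V → G.V → Prop :=
  Relation.ReflTransGen (G.adjOn S)

def Connected : Prop := ∀ u v : G.V, G.reachOn Set.univ u v

def IsLoop (e : G.E) : Prop := G.fst e = G.snd e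

def IsBridge (e : G.E) : Prop := ¬ G.reachOn {f | f ≠ e} (G.fst e) (G.snd e)

/-- Number of connected components of the spanning subgraph with edge set `S`. -/
def comps (S : Set G.E) : ℕ := Nat.card (Quot (G.reachOn S))

/-- Rank of an edge set: `|V|` minus the number of components it spans. -/
def rk (S : Set G.E) : ℕ := Fintype.card G.V - G.comps S

/-- The Tutte polynomial, via the corank-nullity (subgraph) expansion. -/
def tutte (x y : ℚ) : ℚ :=
  ∑ S : Finset G.E,
    (x - 1) ^ (G.rk Set.univ - G.rk (↑S : Set G.E)) * (y - 1) ^ (S.card - G.rk (↑S : Set G.E))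

/-- The genus (cycle rank) `|E| - |V| + 1` of a connected multigraph. -/
def genus : ℕ := Fintype.card G.E + 1 - Fintype.card G.V

/-- A partial orientation: each edge is unoriented (`none`), oriented in the reference
direction `fst → snd` (`some true`), or oriented oppositely (`some false`). -/
abbrev PartialOrientation := G.E → Option Bool

/-- The tail of edge `e` traversed in direction `b` (`true` = `fst → snd`). -/
def dtail (e : G.E) (b : Bool) : G.V := if b then G.fst e else G.snd e

/-- The head of edge `e` traversed in direction `b` (`true` = `fst → snd`). -/
def dhead (e : G.E) (b : Bool) : G.V := if b then G.snd e else G.fst e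

/-- Directed adjacency under a partial orientation. -/
def dAdj (O : G.PartialOrientation) (u v : G.V) : Prop :=
  ∃ e b, O e = some b ∧ G.dtail e b = u ∧ G.dhead e b = v

/-- Directed reachability under a partial orientation. -/
def dReach (O : G.PartialOrientation) : G.V → G.V → Prop :=
  Relation.ReflTransGen (G.dAdj O)

/-- A partial orientation is acyclic iff it contains no directed cycle, equivalently there
is no oriented edge together with a directed path from its head back to its tail. -/
def Acyclic (O : G.PartialOrientation) : Prop :=
  ¬ ∃ e b, O e = some b ∧ G.dReach O (G.dhead e b) (G.dtail e b)

/-- `e` crosses the cut determined by the vertex set `X`. -/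
def crosses (X : Set G.V) (e : G.E) : Prop := ¬ ((G.fst e ∈ X) ↔ (G.snd e ∈ X))

/-- `(X, Xᶜ)` is a directed cut of `O`: the cut is nonempty and every crossing edge is
oriented from `X` to `Xᶜ`. -/
def IsDirCut (O : G.PartialOrientation) (X : Set G.V) : Prop :=
  (∃ e, G.crosses X e) ∧
  ∀ e, G.crosses X e →
    (G.fst e ∈ X → O e = some true) ∧ (G.snd e ∈ X → O e = some false)

/-- A partial orientation is strongly connected iff it contains no directed cut. -/
def StronglyConnected (O : G.PartialOrientation) : Prop :=
  ¬ ∃ X, G.IsDirCut O X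

/-- A directed cycle of `O`: a nonempty cyclically chained list of oriented steps using
pairwise distinct edges, each oriented in `O` as traversed. -/
def IsDCycle (O : G.PartialOrientation) (c : List (G.E × Bool)) : Prop :=
  c ≠ [] ∧ (∀ s ∈ c, O s.1 = some s.2) ∧
  List.Chain' (fun s t => G.dhead s.1 s.2 = G.dtail t.1 t.2) (c ++ c.take 1) ∧
  (c.map Prod.fst).Nodup

/-- A half-open path: a directed path (all steps but the last oriented in `O`) followed by
an unoriented edge, imagined with the direction that would extend the path. -/
def IsHalfOpenPath (O : G.PartialOrientation) (p : List (G.E × Bool)) : Prop :=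
  2 ≤ p.length ∧
  List.Chain' (fun s t => G.dhead s.1 s.2 = G.dtail t.1 t.2) p ∧
  (p.map Prod.fst).Nodup ∧
  (∀ s ∈ p.dropLast, O s.1 = some s.2) ∧
  ∀ h : p ≠ [], O (p.getLast h).1 = none

/-- `O'` is obtained from `O` by reversing one directed cut. -/
def cutRev (O O' : G.PartialOrientation) : Prop :=
  ∃ X, G.IsDirCut O X ∧ (∀ e, ¬ G.crosses X e → O' e = O e) ∧
    (∀ e, G.crosses X e → O' e = (O e).map not)

/-- `O'` is obtained from `O` by reversing one directed cycle. -/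
def cycleRev (O O' : G.PartialOrientation) : Prop :=
  ∃ c, G.IsDCycle O c ∧ (∀ e, e ∉ c.map Prod.fst → O' e = O e) ∧
    (∀ s ∈ c, O' s.1 = some (!s.2))

/-- `O'` is obtained from `O` by a Jacob's ladder cascade along a half-open path:
the first edge becomes unoriented and all other edges get the reversed direction. -/
def cascade (O O' : G.PartialOrientation) : Prop :=
  ∃ p, G.IsHalfOpenPath O p ∧ (∀ e, e ∉ p.map Prod.fst → O' e = O e) ∧
    (∀ h : p ≠ [], O' (p.head h).1 = none) ∧
    (∀ s ∈ p.tail, O' s.1 = some (!s.2))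

/-- An edge pivot at a vertex `v`: unorient an edge `e'` oriented into `v` and orient a
previously unoriented edge `e` toward `v`. -/
def pivot (O O' : G.PartialOrientation) : Prop :=
  ∃ e e' b b', e ≠ e' ∧ O e = none ∧ O e' = some b' ∧
    G.dhead e b = G.dhead e' b' ∧
    O' e = some b ∧ O' e' = none ∧ ∀ f, f ≠ e → f ≠ e' → O' f = O f

/-- A directed cut of `O` is minimal w.r.t. `(<, A)` if its `<`-minimum crossing edge is
oriented as in the reference orientation `A`. -/
def MinimalCut [LinearOrder G.E] (A : G.E → Bool) (O : G.PartialOrientation)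
    (X : Set G.V) : Prop :=
  ∃ e, G.crosses X e ∧ (∀ e', G.crosses X e' → e ≤ e') ∧ O e = some (A e)

/-- A partial orientation is cut minimal if every directed cut in it is minimal. -/
def CutMinimal [LinearOrder G.E] (A : G.E → Bool) (O : G.PartialOrientation) : Prop :=
  ∀ X, G.IsDirCut O X → G.MinimalCut A O X

/-- A list of steps is minimal w.r.t. `(<, A)` if its `<`-minimum edge is traversed in the
direction given by the reference orientation `A`. -/
def MinimalSteps [LinearOrder G.E] (A : G.E → Bool) (c : List (G.E × Bool)) : Prop :=
  ∃ s ∈ c, (∀ t ∈ c, s.1 ≤ t.1) ∧ s.2 = A s.1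

/-- A partial orientation is cycle minimal if every directed cycle in it is minimal. -/
def CycleMinimal [LinearOrder G.E] (A : G.E → Bool) (O : G.PartialOrientation) : Prop :=
  ∀ c, G.IsDCycle O c → G.MinimalSteps A c

/-- A partial orientation is cycle-path minimal if every directed cycle and every
half-open path in it is minimal. -/
def CyclePathMinimal [LinearOrder G.E] (A : G.E → Bool) (O : G.PartialOrientation) : Prop :=
  G.CycleMinimal A O ∧ ∀ p, G.IsHalfOpenPath O p → G.MinimalSteps A p

/-- The indegree of a vertex: the number of edges oriented toward it. -/
def indeg (O : G.PartialOrientation) (v : G.V) : ℕ :=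
  Nat.card {e : G.E // ∃ b, O e = some b ∧ G.dhead e b = v}

/-- Orient the (previously unoriented) edge `e` in direction `b`. -/
def orient (O : G.PartialOrientation) (e : G.E) (b : Bool) : G.PartialOrientation :=
  fun f => if f = e then some b else O f

/-- Deletion of the edge `e`. -/
def deleteEdge (e : G.E) : Multigraph where
  V := G.V
  E := {f : G.E // f ≠ e}
  fintypeE := Subtype.fintype _
  fst := fun f => G.fst f.1
  snd := fun f => G.snd f.1

/-- Contraction of the edge `e`: identify its two endpoints and remove `e`. -/
def contractEdge (e : G.E) : Multigraph where
  V := Quot (fun a b => a = G.fst e ∧ b = G.snd e)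
  E := {f : G.E // f ≠ e}
  fintypeV := Fintype.ofSurjective (Quot.mk _) (Quot.mk_surjective)
  fintypeE := Subtype.fintype _
  fst := fun f => Quot.mk _ (G.fst f.1)
  snd := fun f => Quot.mk _ (G.snd f.1)

/-- The number of acyclic partial orientations of `G`. -/
def numAcyclic : ℕ := Nat.card {O : G.PartialOrientation // G.Acyclic O}

/-- The number of strongly connected partial orientations of `G`. -/
def numStrong : ℕ := Nat.card {O : G.PartialOrientation // G.StronglyConnected O}

end Multigraph

namespace Multigraph

variable {G : Multigraph}

lemma adjOn_symm {S : Set G.E} : Symmetric (G.adjOn S) := by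
  rintro u v ⟨e, he, h⟩; exact ⟨e, he, h.symm⟩

lemma reachOn_symm {S : Set G.E} {u v : G.V} (h : G.reachOn S u v) : G.reachOn S v u :=
  (@Relation.ReflTransGen.symmetric _ (G.adjOn S) ⟨fun _ _ h => adjOn_symm h⟩).symm _ _ h

lemma reachOn_mono {S S' : Set G.E} (hS : S ⊆ S') {u v : G.V} (h : G.reachOn S u v) :
    G.reachOn S' u v :=
  Relation.ReflTransGen.mono (r := G.adjOn S) (p := G.adjOn S') (fun _ _ ⟨e, he, ho⟩ => ⟨e, hS he, ho⟩) _ _ h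

lemma reachOn_equiv (S : Set G.E) : Equivalence (G.reachOn S) :=
  ⟨fun _ => .refl, reachOn_symm, fun h1 h2 => h1.trans h2⟩

lemma reachOn_empty {u v : G.V} (h : G.reachOn (∅ : Set G.E) u v) : u = v := by
  induction h with
  | refl => rfl
  | tail _ step ih => obtain ⟨e, he, _⟩ := step; exact absurd he (Set.notMem_empty e)

lemma straddle {S : Set G.E} {X : Set G.V} {a b : G.V} (h : G.reachOn S a b) (ha : a ∈ X) :
    b ∉ X → ∃ g ∈ S, G.crosses X g := by
  induction h with
  | refl => exact fun hb => absurd ha hb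
  | @tail c d h step ih =>
    intro hd
    by_cases hc : c ∈ X
    · obtain ⟨g, hg, hor⟩ := step
      refine ⟨g, hg, ?_⟩
      rcases hor with ⟨h1, h2⟩ | ⟨h1, h2⟩ <;> simp [crosses, h1, h2, hc, hd]
    · exact ih hc

lemma preserve {S : Set G.E} {X : Set G.V} {a b : G.V} (h : G.reachOn S a b)
    (hS : ∀ g ∈ S, ¬ G.crosses X g) (ha : a ∈ X) : b ∈ X := by
  induction h with
  | refl => exact ha
  | @tail c d h step ih =>
    obtain ⟨g, hg, hor⟩ := step
    have hiff := not_not.mp (hS g hg)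
    rcases hor with ⟨h1, h2⟩ | ⟨h1, h2⟩
    · exact h2 ▸ (h1 ▸ hiff :).mp (by exact ih)
    · exact h1 ▸ (h2 ▸ hiff :).mpr (by exact ih)

lemma crosses_compl {X : Set G.V} {e : G.E} : G.crosses X e ↔ G.crosses Xᶜ e := by
  simp only [crosses, Set.mem_compl_iff]; tauto

lemma endpoints (e : G.E) (b : Bool) :
    (G.dtail e b = G.fst e ∧ G.dhead e b = G.snd e) ∨
    (G.dtail e b = G.snd e ∧ G.dhead e b = G.fst e) := by
  cases b <;> simp [dtail, dhead]

lemma dstraddle {O : G.PartialOrientation} {X : Set G.V} {a b : G.V} (h : G.dReach O a b)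
    (ha : a ∉ X) : b ∈ X → ∃ e bb, O e = some bb ∧ G.dtail e bb ∉ X ∧ G.dhead e bb ∈ X := by
  induction h with
  | refl => exact fun hb => absurd hb ha
  | @tail c d h step ih =>
    intro hd
    by_cases hc : c ∈ X
    · exact ih hc
    · obtain ⟨e, bb, he, ht, hh⟩ := step
      exact ⟨e, bb, he, by rw [ht]; exact hc, by rw [hh]; exact hd⟩

lemma reachOn_insert_cases {S : Set G.E} {e : G.E} {a b : G.V}
    (h : G.reachOn (insert e S) a b) :
    G.reachOn S a b ∨ ((G.reachOn S a (G.fst e) ∨ G.reachOn S a (G.snd e)) ∧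
      (G.reachOn S b (G.fst e) ∨ G.reachOn S b (G.snd e))) := by
  induction h with
  | refl => exact Or.inl .refl
  | @tail c d h step ih =>
    obtain ⟨f, hf, hor⟩ := step
    rcases Set.mem_insert_iff.1 hf with rfl | hfS
    · right
      constructor
      · rcases ih with h1 | ⟨h1, _⟩
        · rcases hor with ⟨h2, h3⟩ | ⟨h2, h3⟩
          · exact Or.inl (h2 ▸ h1)
          · exact Or.inr (h3 ▸ h1)
        · exact h1
      · rcases hor with ⟨h2, h3⟩ | ⟨h2, h3⟩
        · exact Or.inr (h3 ▸ Relation.ReflTransGen.refl)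
        · exact Or.inl (h2 ▸ Relation.ReflTransGen.refl)
    · have step' : G.adjOn S c d := ⟨f, hfS, hor⟩
      rcases ih with h1 | ⟨h1, h2⟩
      · exact Or.inl (h1.tail step')
      · refine Or.inr ⟨h1, ?_⟩
        have hdc : G.reachOn S d c := reachOn_symm (Relation.ReflTransGen.single step')
        rcases h2 with h2 | h2
        · exact Or.inl (hdc.trans h2)
        · exact Or.inr (hdc.trans h2)

lemma card_quot_insert_le (S : Set G.E) (e : G.E) :
    Nat.card (Quot (G.reachOn S)) ≤ Nat.card (Quot (G.reachOn (insert e S))) + 1 := by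
  classical
  set r := G.reachOn S with hr
  set r' := G.reachOn (insert e S) with hr'
  haveI : Finite (Quot r') := Finite.of_surjective _ Quot.mk_surjective
  haveI := Fintype.ofFinite (Quot r')
  have hmono : ∀ {a b : G.V}, r a b → r' a b := fun h => reachOn_mono (Set.subset_insert e S) h
  let g : Quot r → Quot r' := Quot.map id (fun _ _ h => hmono h)
  have hg : ∀ a : G.V, g (Quot.mk r a) = Quot.mk r' a := fun a => rfl
  have hkey : ∀ x y : Quot r, g x = g y → x = y ∨
      ((x = Quot.mk r (G.fst e) ∨ x = Quot.mk r (G.snd e)) ∧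
       (y = Quot.mk r (G.fst e) ∨ y = Quot.mk r (G.snd e))) := by
    refine Quot.ind fun a => Quot.ind fun b h => ?_
    rw [hg, hg] at h
    have hab : r' a b := by
      have := Quot.eqvGen_exact h
      rwa [(reachOn_equiv (insert e S)).eqvGen_eq] at this
    rcases reachOn_insert_cases hab with h1 | ⟨h1, h2⟩
    · exact Or.inl (Quot.sound h1)
    · refine Or.inr ⟨?_, ?_⟩
      · rcases h1 with h1 | h1
        · exact Or.inl (Quot.sound h1)
        · exact Or.inr (Quot.sound h1)
      · rcases h2 with h2 | h2
        · exact Or.inl (Quot.sound h2)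
        · exact Or.inr (Quot.sound h2)
  let F : Quot r → Option (Quot r') :=
    fun x => if x = Quot.mk r (G.snd e) then none else some (g x)
  have hF : Function.Injective F := by
    intro x y hxy
    by_cases hx : x = Quot.mk r (G.snd e) <;> by_cases hy : y = Quot.mk r (G.snd e) <;>
      simp [F, hx, hy] at hxy
    · exact hx.trans hy.symm
    · rcases hkey x y hxy with h | ⟨h1, h2⟩
      · exact h
      · rcases h1 with h1 | h1
        · rcases h2 with h2 | h2
          · exact h1.trans h2.symm
          · exact absurd h2 hy
        · exact absurd h1 hx
  calc Nat.card (Quot r) ≤ Nat.card (Option (Quot r')) := Nat.card_le_card_of_injective F hF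
    _ = Nat.card (Quot r') + 1 := Finite.card_option

lemma card_V_le (S : Finset G.E) :
    Fintype.card G.V ≤ Nat.card (Quot (G.reachOn (↑S : Set G.E))) + S.card := by
  classical
  induction S using Finset.induction_on with
  | empty =>
    rw [show ((↑(∅ : Finset G.E) : Set G.E)) = (∅ : Set G.E) from by simp]
    have hbij : Function.Bijective (Quot.mk (G.reachOn (∅ : Set G.E))) := by
      constructor
      · intro a b h
        have := Quot.eqvGen_exact h
        rw [(reachOn_equiv _).eqvGen_eq] at this
        exact reachOn_empty this
      · exact Quot.mk_surjective
    have hb := Nat.card_eq_of_bijective _ hbij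
    rw [Nat.card_eq_fintype_card] at hb
    simp [← hb]
  | @insert e S heS ih =>
    have h2 := card_quot_insert_le (G := G) (↑S : Set G.E) e
    have hco : (↑(insert e S) : Set G.E) = insert e (↑S : Set G.E) := by simp
    rw [hco, Finset.card_insert_of_notMem heS]
    omega

lemma bridge {T : Set G.E} (hspan : ∀ u v, G.reachOn T u v)
    (hcard : Nat.card T = Fintype.card G.V - 1) {t : G.E} (ht : t ∈ T) :
    ¬ G.reachOn (T \ {t}) (G.fst t) (G.snd t) := by
  intro hre
  have hspan' : ∀ u v, G.reachOn (T \ {t}) u v := by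
    intro u v
    have h := hspan u v
    induction h with
    | refl => exact .refl
    | @tail c d h step ih =>
      obtain ⟨f, hf, hor⟩ := step
      by_cases hft : f = t
      · subst hft
        rcases hor with ⟨h1, h2⟩ | ⟨h1, h2⟩
        · exact ih.trans (h1 ▸ h2 ▸ hre)
        · exact ih.trans (h1 ▸ h2 ▸ reachOn_symm hre)
      · exact ih.tail ⟨f, ⟨hf, by simpa using hft⟩, hor⟩
  haveI : Nonempty G.V := ⟨G.fst t⟩
  have hone : Nat.card (Quot (G.reachOn (T \ {t}))) = 1 := by
    rw [Nat.card_eq_one_iff_unique]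
    refine ⟨⟨?_⟩, ⟨Quot.mk _ (G.fst t)⟩⟩
    refine Quot.ind fun a => Quot.ind fun b => ?_
    exact Quot.sound (hspan' a b)
  classical
  have hfin : (T \ {t}).Finite := Set.toFinite _
  have hcount := card_V_le (G := G) hfin.toFinset
  rw [hfin.coe_toFinset, hone] at hcount
  have hc2 : hfin.toFinset.card = (T \ {t}).ncard := (Set.ncard_eq_toFinset_card _ hfin).symm
  have hc3 : (T \ {t}).ncard = T.ncard - 1 := by
    rw [Set.ncard_diff_singleton_of_mem ht]
  have hc4 : T.ncard = Fintype.card G.V - 1 := by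
    rw [← Nat.card_coe_set_eq]; exact hcard
  have hc5 : 0 < T.ncard := (Set.ncard_pos (Set.toFinite T)).2 ⟨t, ht⟩
  omega

lemma not_reach_head {T : Set G.E} {q : G.V} {A : G.E → Bool}
    (hspan : ∀ u v, G.reachOn T u v)
    (hcard : Nat.card T = Fintype.card G.V - 1)
    (haway : ∀ t ∈ T, G.reachOn (T \ {t}) q (G.dtail t (A t)))
    {t : G.E} (ht : t ∈ T) : ¬ G.reachOn (T \ {t}) q (G.dhead t (A t)) := by
  intro hh
  have hb := bridge hspan hcard ht
  have htl := haway t ht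
  have hth : G.reachOn (T \ {t}) (G.dtail t (A t)) (G.dhead t (A t)) := (reachOn_symm htl).trans hh
  cases hA : A t
  · rw [hA] at hth
    simp only [dtail, dhead, if_neg Bool.false_ne_true] at hth
    exact hb (reachOn_symm hth)
  · rw [hA] at hth
    simp only [dtail, dhead, if_pos rfl] at hth
    exact hb hth

lemma lemmaL {T : Set G.E} {q : G.V} {A : G.E → Bool}
    (hspan : ∀ u v, G.reachOn T u v)
    (hcard : Nat.card T = Fintype.card G.V - 1)
    (haway : ∀ t ∈ T, G.reachOn (T \ {t}) q (G.dtail t (A t)))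
    (C : Set G.E) (hCT : C ⊆ T) (w : G.V)
    (hw : ∀ t ∈ C, G.reachOn (T \ {t}) q w) : G.reachOn (T \ C) q w := by
  have hfin : C.Finite := Set.toFinite C
  revert hCT hw
  refine Set.Finite.induction_on
    (motive := fun s _ => s ⊆ T → (∀ t ∈ s, G.reachOn (T \ {t}) q w) → G.reachOn (T \ s) q w)
    C hfin ?_ ?_
  · intro _ _
    simpa using hspan q w
  · intro t₀ s ht₀s hsfin ih hsub hw
    have ht₀T : t₀ ∈ T := hsub (Set.mem_insert _ _)
    have hsT : s ⊆ T := fun x hx => hsub (Set.mem_insert_of_mem _ hx)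
    have IH : G.reachOn (T \ s) q w := ih hsT (fun t htx => hw t (Set.mem_insert_of_mem _ htx))
    set Y : G.V → Prop := fun v => G.reachOn (T \ {t₀}) q v with hY
    have hqY : Y q := .refl
    have htailY : Y (G.dtail t₀ (A t₀)) := haway t₀ ht₀T
    have hheadY : ¬ Y (G.dhead t₀ (A t₀)) := not_reach_head hspan hcard haway ht₀T
    have hsame : ∀ g ∈ T, g ≠ t₀ → (Y (G.fst g) ↔ Y (G.snd g)) := by
      intro g hgT hgt
      have hadj : G.adjOn (T \ {t₀}) (G.fst g) (G.snd g) :=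
        ⟨g, ⟨hgT, by simpa using hgt⟩, Or.inl ⟨rfl, rfl⟩⟩
      exact ⟨fun h => h.tail hadj, fun h => h.tail (adjOn_symm hadj)⟩
    have hset : (G.fst t₀ = G.dtail t₀ (A t₀) ∧ G.snd t₀ = G.dhead t₀ (A t₀)) ∨
        (G.fst t₀ = G.dhead t₀ (A t₀) ∧ G.snd t₀ = G.dtail t₀ (A t₀)) := by
      cases hA : A t₀ <;> simp [dtail, dhead, hA]
    have key : ∀ z, G.reachOn (T \ s) q z →
        (Y z → G.reachOn (T \ insert t₀ s) q z) ∧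
        (¬ Y z → G.reachOn (T \ insert t₀ s) q (G.dtail t₀ (A t₀))) := by
      intro z hz
      induction hz with
      | refl => exact ⟨fun _ => .refl, fun h => absurd hqY h⟩
      | @tail c d h step ih2 =>
        obtain ⟨g, hg, hor⟩ := step
        by_cases hgt : g = t₀
        · subst hgt
          have hcd : (c = G.dtail g (A g) ∧ d = G.dhead g (A g)) ∨
              (c = G.dhead g (A g) ∧ d = G.dtail g (A g)) := by
            rcases hset with ⟨h1, h2⟩ | ⟨h1, h2⟩ <;> rcases hor with ⟨h3, h4⟩ | ⟨h3, h4⟩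
            · exact Or.inl ⟨h3 ▸ h1, h4 ▸ h2⟩
            · exact Or.inr ⟨h4 ▸ h2, h3 ▸ h1⟩
            · exact Or.inr ⟨h3 ▸ h1, h4 ▸ h2⟩
            · exact Or.inl ⟨h4 ▸ h2, h3 ▸ h1⟩
          have goalTail : G.reachOn (T \ insert g s) q (G.dtail g (A g)) := by
            rcases hcd with ⟨hc, _⟩ | ⟨hc, _⟩
            · exact hc ▸ ih2.1 (hc ▸ htailY)
            · exact ih2.2 (hc ▸ hheadY)
          refine ⟨fun hdY => ?_, fun _ => goalTail⟩
          rcases hcd with ⟨_, hd⟩ | ⟨_, hd⟩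
          · exact absurd (hd ▸ hdY) hheadY
          · exact hd ▸ goalTail
        · have hgT : g ∈ T := hg.1
          have hiff : (Y c ↔ Y d) := by
            rcases hor with ⟨h1, h2⟩ | ⟨h1, h2⟩
            · exact h1 ▸ h2 ▸ hsame g hgT hgt
            · exact h1 ▸ h2 ▸ (hsame g hgT hgt).symm
          have hg' : g ∈ T \ insert t₀ s := ⟨hg.1, by
            simp only [Set.mem_insert_iff, not_or]
            exact ⟨hgt, hg.2⟩⟩
          exact ⟨fun hdY => (ih2.1 (hiff.mpr hdY)).tail ⟨g, hg', hor⟩,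
            fun hdN => ih2.2 (fun hcY => hdN (hiff.mp hcY))⟩
    exact (key w IH).1 (hw t₀ (Set.mem_insert _ _))

lemma keylemma {G : Multigraph} [LinearOrder G.E] {A : G.E → Bool} {q : G.V} {T : Set G.E}
    (hspan : ∀ u v, G.reachOn T u v)
    (hcard : Nat.card T = Fintype.card G.V - 1)
    (haway : ∀ t ∈ T, G.reachOn (T \ {t}) q (G.dtail t (A t)))
    (htree_first : ∀ t ∈ T, ∀ f, f ∉ T → t < f)
    (hdesc : ∀ t ∈ T, ∀ t' ∈ T, ¬ G.reachOn (T \ {t}) q (G.dtail t' (A t')) → t < t')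
    {X : Set G.V} (hqX : q ∈ X) {e : G.E} (hcr : G.crosses X e)
    (hmin : ∀ e', G.crosses X e' → e ≤ e') :
    G.dtail e (A e) ∈ X := by
  obtain ⟨u', hu'X⟩ : ∃ u', u' ∉ X := by
    by_cases h1 : G.fst e ∈ X
    · exact ⟨G.snd e, fun h2 => hcr ⟨fun _ => h2, fun _ => h1⟩⟩
    · exact ⟨G.fst e, h1⟩
  obtain ⟨t, htT, htcr⟩ := straddle (hspan q u') hqX hu'X
  have heT : e ∈ T := by
    by_contra heT
    exact absurd (hmin t htcr) (not_le.2 (htree_first t htT e heT))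
  by_contra htail
  have hnot : ¬ G.reachOn (T \ {t | t ∈ T ∧ G.crosses X t}) q (G.dtail e (A e)) := by
    intro h
    refine htail (preserve h ?_ hqX)
    rintro g ⟨hgT, hgC⟩ hgcr
    exact hgC ⟨hgT, hgcr⟩
  have hnall : ¬ ∀ t ∈ {t | t ∈ T ∧ G.crosses X t}, G.reachOn (T \ {t}) q (G.dtail e (A e)) :=
    fun hall => hnot (lemmaL hspan hcard haway _ (fun x hx => hx.1) _ hall)
  push_neg at hnall
  obtain ⟨t₀, ht₀C, ht₀n⟩ := hnall
  exact absurd (hmin t₀ ht₀C.2) (not_le.2 (hdesc t₀ ht₀C.1 e heT ht₀n))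

end Multigraph

/-- for a `q`-connected pair `(<, A)` (a spanning tree `T` oriented away
from the root `q` by `A`, whose edges come first in the order `<` with each tree edge
smaller than its descendants), a full orientation is cut minimal iff every vertex is
reachable from `q` by a directed path. -/
theorem stmt13 (G : Multigraph) [LinearOrder G.E] (A : G.E → Bool) (hG : G.Connected)
    (q : G.V) (T : Set G.E)
    (hspan : ∀ u v, G.reachOn T u v)
    (hcard : Nat.card T = Fintype.card G.V - 1)
    (haway : ∀ t ∈ T, G.reachOn (T \ {t}) q (G.dtail t (A t)))
    (htree_first : ∀ t ∈ T, ∀ f, f ∉ T → t < f)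
    (hdesc : ∀ t ∈ T, ∀ t' ∈ T, ¬ G.reachOn (T \ {t}) q (G.dtail t' (A t')) → t < t')
    (O : G.PartialOrientation) (hfull : ∀ e, O e ≠ none) :
    G.CutMinimal A O ↔ ∀ v, G.dReach O q v := by
  classical
  constructor
  · intro hmin
    by_contra hv
    push_neg at hv
    obtain ⟨v₀, hv₀⟩ := hv
    set Z : Set G.V := {w | G.dReach O q w} with hZ
    have hqZ : q ∈ Z := Relation.ReflTransGen.refl
    have hclosed : ∀ e b, O e = some b → G.dtail e b ∈ Z → G.dhead e b ∈ Z :=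
      fun e b he h => Relation.ReflTransGen.tail h ⟨e, b, he, rfl, rfl⟩
    have hcut : G.IsDirCut O Zᶜ := by
      constructor
      · obtain ⟨g, _, hg⟩ := Multigraph.straddle (hG q v₀) hqZ hv₀
        exact ⟨g, Multigraph.crosses_compl.1 hg⟩
      · intro f hf
        have hf' : G.crosses Z f := Multigraph.crosses_compl.2 hf
        obtain ⟨b, hb⟩ : ∃ b, O f = some b := Option.ne_none_iff_exists'.1 (hfull f)
        have htailZ : G.dtail f b ∉ Z := by
          intro h
          have hh := hclosed f b hb h
          rcases Multigraph.endpoints f b with ⟨h1, h2⟩ | ⟨h1, h2⟩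
          · exact hf' ⟨fun _ => h2 ▸ hh, fun _ => h1 ▸ h⟩
          · exact hf' ⟨fun _ => h1 ▸ h, fun _ => h2 ▸ hh⟩
        constructor
        · intro hfst
          cases b
          · exfalso
            have h2 : G.snd f ∉ Z := by simpa [Multigraph.dtail] using htailZ
            exact hf' ⟨fun h => absurd h hfst, fun h => absurd h h2⟩
          · exact hb
        · intro hsnd
          cases b
          · exact hb
          · exfalso
            have h2 : G.fst f ∉ Z := by simpa [Multigraph.dtail] using htailZ
            exact hf' ⟨fun h => absurd h h2, fun h => absurd h hsnd⟩
    obtain ⟨e, hecr, hemin, heO⟩ := hmin Zᶜ hcut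
    have hecr' : G.crosses Z e := Multigraph.crosses_compl.2 hecr
    have hemin' : ∀ e', G.crosses Z e' → e ≤ e' :=
      fun e' h => hemin e' (Multigraph.crosses_compl.1 h)
    have htl := Multigraph.keylemma hspan hcard haway htree_first hdesc hqZ hecr' hemin'
    have hhd := hclosed e (A e) heO htl
    rcases Multigraph.endpoints e (A e) with ⟨h1, h2⟩ | ⟨h1, h2⟩
    · exact hecr' ⟨fun _ => h2 ▸ hhd, fun _ => h1 ▸ htl⟩
    · exact hecr' ⟨fun _ => h1 ▸ htl, fun _ => h2 ▸ hhd⟩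
  · intro hreach X hX
    obtain ⟨⟨f, hfcr⟩, hdir⟩ := hX
    have hqX : q ∈ X := by
      by_contra hqX
      obtain ⟨u, huX⟩ : ∃ u, u ∈ X := by
        by_cases h1 : G.fst f ∈ X
        · exact ⟨_, h1⟩
        · by_cases h2 : G.snd f ∈ X
          · exact ⟨_, h2⟩
          · exact absurd ⟨fun h => absurd h h1, fun h => absurd h h2⟩ hfcr
      obtain ⟨g, bb, hg, hgt, hgh⟩ := Multigraph.dstraddle (hreach u) hqX huX
      have hgcr : G.crosses X g := by
        rcases Multigraph.endpoints g bb with ⟨h1, h2⟩ | ⟨h1, h2⟩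
        · exact fun hiff => (h1 ▸ hgt) (hiff.mpr (h2 ▸ hgh))
        · exact fun hiff => (h1 ▸ hgt) (hiff.mp (h2 ▸ hgh))
      have hd := hdir g hgcr
      cases bb
      · have hsnd : G.snd g ∉ X := by simpa [Multigraph.dtail] using hgt
        have hfst : G.fst g ∉ X := by
          intro h
          rw [hd.1 h] at hg
          simp at hg
        exact hgcr ⟨fun h => absurd h hfst, fun h => absurd h hsnd⟩
      · have hfst : G.fst g ∉ X := by simpa [Multigraph.dtail] using hgt
        have hsnd : G.snd g ∉ X := by
          intro h
          rw [hd.2 h] at hg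
          simp at hg
        exact hgcr ⟨fun h => absurd h hfst, fun h => absurd h hsnd⟩
    have hfne : (Finset.univ.filter (fun e : G.E => G.crosses X e)).Nonempty :=
      ⟨f, by simp [hfcr]⟩
    set cr := Finset.univ.filter (fun e : G.E => G.crosses X e) with hcrdef
    have hecr : G.crosses X (cr.min' hfne) := by
      have hm := cr.min'_mem hfne
      simp only [hcrdef, Finset.mem_filter] at hm
      exact hm.2
    have hemin : ∀ e', G.crosses X e' → cr.min' hfne ≤ e' := fun e' h =>
      cr.min'_le e' (by simp [hcrdef, h])
    have htl := Multigraph.keylemma hspan hcard haway htree_first hdesc hqX hecr hemin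
    refine ⟨cr.min' hfne, hecr, hemin, ?_⟩
    cases hA : A (cr.min' hfne)
    · rw [hA] at htl
      have hs : G.snd (cr.min' hfne) ∈ X := by simpa [Multigraph.dtail] using htl
      rw [(hdir _ hecr).2 hs]
    · rw [hA] at htl
      have hs : G.fst (cr.min' hfne) ∈ X := by simpa [Multigraph.dtail] using htl
      rw [(hdir _ hecr).1 hs]
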